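/- Suppose A ∈ ℝ^{n×n}, q, p ∈ ℝⁿ, δ ≥ 0, κ, μ > 0, c > 0, and (diag(p)A + (β - gp)pᵀ)ˢ = 0, Aᵀp = -(μ - gκ)p - κβ for some β ∈ ℝ₊ⁿ, g ≥ 0. Define W_c(x) = (q - cp)ᵀ(x - 1ₙ) - Σᵢ (qᵢ - c pᵢ) ln xᵢ + c(S - κ - κ ln(S/κ)) with S = pᵀ(x - 1ₙ) + κ. Then along ẋ = diag(x)A(x - 1ₙ), for all x in int(ℝ₊ⁿ) with S > 0: Ẇ_c(x) = (x - 1ₙ)ᵀ(diag(q)A - δ p pᵀ)ˢ(x - 1ₙ) - (cμ/S - δ)·(pᵀ(x - 1ₙ))². -/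

import Mathlib

open Matrix

private lemma aux_vmv {n : ℕ} (u v y : Fin n → ℝ) :
    Matrix.vecMulVec u v *ᵥ y = (v ⬝ᵥ y) • u := by
  ext i
  simp [Matrix.mulVec, dotProduct, Matrix.vecMulVec_apply, Finset.mul_sum, mul_assoc,
    mul_comm, mul_left_comm]

private lemma aux_symm {n : ℕ} (M : Matrix (Fin n) (Fin n) ℝ) (y : Fin n → ℝ) :
    y ⬝ᵥ (Mᵀ *ᵥ y) = y ⬝ᵥ (M *ᵥ y) := by
  rw [Matrix.mulVec_transpose, dotProduct_comm, ← Matrix.dotProduct_mulVec]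

private lemma aux_diag {n : ℕ} (p : Fin n → ℝ) (A : Matrix (Fin n) (Fin n) ℝ) (y : Fin n → ℝ) :
    y ⬝ᵥ ((Matrix.diagonal p * A) *ᵥ y) = ∑ i, p i * y i * (A *ᵥ y) i := by
  rw [← Matrix.mulVec_mulVec]
  simp only [dotProduct, Matrix.mulVec_diagonal]
  exact Finset.sum_congr rfl fun i _ => by ring

/-- Under (diag(p)A + (β - gp)pᵀ)ˢ = 0 and Aᵀp = -(μ-gκ)p - κβ with
β ∈ ℝ₊ⁿ, g ≥ 0, the function
W_c(x) = (q - cp)ᵀ(x-1ₙ) - Σᵢ(qᵢ - c pᵢ) ln xᵢ + c(S - κ - κ ln(S/κ)),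
S = pᵀ(x-1ₙ) + κ, satisfies along ẋ = diag(x)A(x-1ₙ), for x in the positive orthant
with S > 0: Ẇ_c(x) = (x-1ₙ)ᵀ(diag(q)A - δ p pᵀ)ˢ(x-1ₙ) - (cμ/S - δ)(pᵀ(x-1ₙ))². -/
theorem stmt16 (n : ℕ) (A : Matrix (Fin n) (Fin n) ℝ) (q p β : Fin n → ℝ)
    (δ κ μ c g : ℝ) (hδ : 0 ≤ δ) (hκ : 0 < κ) (hμ : 0 < μ) (hc : 0 < c)
    (hβ : ∀ i, 0 ≤ β i) (hg : 0 ≤ g)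
    (h1 : (1/2 : ℝ) • ((Matrix.diagonal p * A + Matrix.vecMulVec (β - g • p) p)
        + (Matrix.diagonal p * A + Matrix.vecMulVec (β - g • p) p)ᵀ) = 0)
    (h2 : Aᵀ *ᵥ p = -(μ - g * κ) • p - κ • β)
    (S W : (Fin n → ℝ) → ℝ)
    (hS : ∀ x : Fin n → ℝ, S x = p ⬝ᵥ (x - 1) + κ)
    (hW : ∀ x : Fin n → ℝ,
      W x = (q - c • p) ⬝ᵥ (x - 1) - ∑ i, (q i - c * p i) * Real.log (x i)
        + c * (S x - κ - κ * Real.log (S x / κ)))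
    (F : (Fin n → ℝ) → (Fin n → ℝ))
    (hF : ∀ x : Fin n → ℝ, F x = fun i => x i * (A *ᵥ (x - 1)) i)
    (Q : Matrix (Fin n) (Fin n) ℝ)
    (hQ : Q = (1/2 : ℝ) • ((Matrix.diagonal q * A - δ • Matrix.vecMulVec p p)
      + (Matrix.diagonal q * A - δ • Matrix.vecMulVec p p)ᵀ)) :
    ∀ x : Fin n → ℝ, (∀ i, 0 < x i) → 0 < S x →
      fderiv ℝ W x (F x)
        = (x - 1) ⬝ᵥ (Q *ᵥ (x - 1)) - (c * μ / S x - δ) * (p ⬝ᵥ (x - 1))^2 := by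
  intro x hx hSx
  have hκ0 : κ ≠ 0 := hκ.ne'
  have hS0 : S x ≠ 0 := hSx.ne'
  have hx0 : ∀ i, x i ≠ 0 := fun i => (hx i).ne'
  set y : Fin n → ℝ := x - 1 with hy
  set d : Fin n → ℝ := A *ᵥ y with hd
  set Lp : (Fin n → ℝ) →L[ℝ] ℝ :=
    ∑ i, p i • (ContinuousLinearMap.proj i : (Fin n → ℝ) →L[ℝ] ℝ) with hLp
  -- derivative of S
  have hSder : HasFDerivAt S Lp x := by
    have h : ∀ i : Fin n, HasFDerivAt (fun x : Fin n → ℝ => p i * (x i - 1))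
        (p i • (ContinuousLinearMap.proj i : (Fin n → ℝ) →L[ℝ] ℝ)) x := fun i =>
      (((ContinuousLinearMap.proj i : (Fin n → ℝ) →L[ℝ] ℝ).hasFDerivAt).sub_const 1).const_mul (p i)
    have h' := (HasFDerivAt.fun_sum (u := Finset.univ) (fun i _ => h i)).add_const κ
    have : S = fun x : Fin n → ℝ => ∑ i, p i * (x i - 1) + κ := by
      funext z; rw [hS z]; simp [dotProduct]
    rw [this]; exact h'
  -- derivative of the linear part
  have hW1 : HasFDerivAt (fun x : Fin n → ℝ => (q - c • p) ⬝ᵥ (x - 1))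
      (∑ i, (q i - c * p i) • (ContinuousLinearMap.proj i : (Fin n → ℝ) →L[ℝ] ℝ)) x := by
    have h : ∀ i : Fin n, HasFDerivAt (fun x : Fin n → ℝ => (q i - c * p i) * (x i - 1))
        ((q i - c * p i) • (ContinuousLinearMap.proj i : (Fin n → ℝ) →L[ℝ] ℝ)) x := fun i =>
      (((ContinuousLinearMap.proj i : (Fin n → ℝ) →L[ℝ] ℝ).hasFDerivAt).sub_const 1).const_mul _
    have h' := HasFDerivAt.fun_sum (u := Finset.univ) (fun i _ => h i)
    have : (fun x : Fin n → ℝ => (q - c • p) ⬝ᵥ (x - 1))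
        = fun x : Fin n → ℝ => ∑ i, (q i - c * p i) * (x i - 1) := by
      funext z; simp [dotProduct]
    rw [this]; exact h'
  -- derivative of log-sum
  have hW2 : HasFDerivAt (fun x : Fin n → ℝ => ∑ i, (q i - c * p i) * Real.log (x i))
      (∑ i, ((q i - c * p i) * (x i)⁻¹) • (ContinuousLinearMap.proj i : (Fin n → ℝ) →L[ℝ] ℝ)) x := by
    refine HasFDerivAt.fun_sum (u := Finset.univ) (fun i _ => ?_)
    have := (((ContinuousLinearMap.proj i : (Fin n → ℝ) →L[ℝ] ℝ).hasFDerivAt (x := x)).log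
      (hx0 i)).const_mul (q i - c * p i)
    simpa [smul_smul] using this
  -- derivative of log(S/κ)
  have hW3log : HasFDerivAt (fun x => Real.log (S x / κ)) ((S x)⁻¹ • Lp) x := by
    have h1' : HasFDerivAt (fun x => S x / κ) (κ⁻¹ • Lp) x := by
      simp only [div_eq_mul_inv]
      simpa [smul_smul, mul_comm] using hSder.mul_const κ⁻¹
    have := h1'.log (div_ne_zero hS0 hκ0)
    rw [smul_smul, show ((S x / κ)⁻¹ * κ⁻¹ : ℝ) = (S x)⁻¹ from by field_simp] at this
    exact this
  have hW3 : HasFDerivAt (fun x => c * (S x - κ - κ * Real.log (S x / κ)))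
      (c • ((Lp - κ • ((S x)⁻¹ • Lp)))) x :=
    (((hSder.sub_const κ).sub (hW3log.const_mul κ)).const_mul c)
  have hWeq : W = fun x : Fin n → ℝ =>
      (q - c • p) ⬝ᵥ (x - 1) - ∑ i, (q i - c * p i) * Real.log (x i)
        + c * (S x - κ - κ * Real.log (S x / κ)) := funext hW
  have hWd : HasFDerivAt W
      ((∑ i, (q i - c * p i) • (ContinuousLinearMap.proj i : (Fin n → ℝ) →L[ℝ] ℝ))
        - (∑ i, ((q i - c * p i) * (x i)⁻¹) • (ContinuousLinearMap.proj i : (Fin n → ℝ) →L[ℝ] ℝ))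
        + c • ((Lp - κ • ((S x)⁻¹ • Lp)))) x := by
    rw [hWeq]; exact (hW1.sub hW2).add hW3
  rw [hWd.fderiv]
  -- key scalar quantities
  set u : ℝ := p ⬝ᵥ y with hu
  set b : ℝ := β ⬝ᵥ y with hb
  set T : ℝ := ∑ i, p i * y i * d i with hT
  set E : ℝ := ∑ i, q i * y i * d i with hE
  -- fact 1 : T = -(b - g*u)*u
  have fact1 : T + (b - g * u) * u = 0 := by
    have hM : (Matrix.diagonal p * A + Matrix.vecMulVec (β - g • p) p)
        + (Matrix.diagonal p * A + Matrix.vecMulVec (β - g • p) p)ᵀ = 0 := by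
      have := congrArg (fun M => (2 : ℝ) • M) h1
      simpa [smul_smul] using this
    have hq0 : y ⬝ᵥ ((Matrix.diagonal p * A) *ᵥ y)
        + y ⬝ᵥ (Matrix.vecMulVec (β - g • p) p *ᵥ y) = 0 := by
      have := congrArg (fun M => y ⬝ᵥ (M *ᵥ y)) hM
      simp only [Matrix.add_mulVec, dotProduct_add, aux_symm, Matrix.zero_mulVec,
        dotProduct_zero] at this
      linarith
    rw [aux_diag, aux_vmv, dotProduct_smul, smul_eq_mul] at hq0
    have hyβ : y ⬝ᵥ (β - g • p) = b - g * u := by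
      rw [dotProduct_sub, dotProduct_smul, smul_eq_mul,
        dotProduct_comm y β, dotProduct_comm y p]
    rw [hyβ] at hq0
    rw [← hd, ← hT, ← hu] at hq0
    linarith [hq0, mul_comm u (b - g * u)]
  -- fact 2 : p ⬝ᵥ d = -(μ - g*κ)*u - κ*b
  have fact2 : p ⬝ᵥ d = -(μ - g * κ) * u - κ * b := by
    have : p ⬝ᵥ d = (Aᵀ *ᵥ p) ⬝ᵥ y := by
      rw [hd, Matrix.dotProduct_mulVec, Matrix.mulVec_transpose]
    rw [this, h2, sub_dotProduct, smul_dotProduct, smul_dotProduct,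
      smul_eq_mul, smul_eq_mul, ← hu, ← hb]
  -- fact 3 : quadratic form of Q
  have fact3 : y ⬝ᵥ (Q *ᵥ y) = E - δ * u ^ 2 := by
    have : y ⬝ᵥ (Q *ᵥ y)
        = y ⬝ᵥ ((Matrix.diagonal q * A - δ • Matrix.vecMulVec p p) *ᵥ y) := by
      rw [hQ]
      have hsym := aux_symm (Matrix.diagonal q * A - δ • Matrix.vecMulVec p p) y
      rw [Matrix.smul_mulVec, Matrix.add_mulVec, dotProduct_smul,
        dotProduct_add, hsym, smul_eq_mul]
      ring
    rw [this, Matrix.sub_mulVec, dotProduct_sub, aux_diag, Matrix.smul_mulVec,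
      dotProduct_smul, aux_vmv, dotProduct_smul, smul_eq_mul, smul_eq_mul,
      dotProduct_comm y p, ← hd, ← hE, ← hu]
    ring
  rw [fact3]
  have hFx : F x = fun i => x i * d i := by rw [hF x, ← hy, ← hd]
  have happ : (((∑ i, (q i - c * p i) • (ContinuousLinearMap.proj i : (Fin n → ℝ) →L[ℝ] ℝ))
        - (∑ i, ((q i - c * p i) * (x i)⁻¹) • (ContinuousLinearMap.proj i : (Fin n → ℝ) →L[ℝ] ℝ))
        + c • ((Lp - κ • ((S x)⁻¹ • Lp)))) : (Fin n → ℝ) →L[ℝ] ℝ) (F x)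
      = ∑ i, (q i - c * p i) * (x i * d i)
        - ∑ i, (q i - c * p i) * (x i)⁻¹ * (x i * d i)
        + c * ((∑ i, p i * (x i * d i)) - κ * ((S x)⁻¹ * ∑ i, p i * (x i * d i))) := by
    simp [hLp, ContinuousLinearMap.sum_apply, hFx, mul_assoc]
  rw [happ]
  have key1 : ∑ i, (q i - c * p i) * (x i * d i)
      - ∑ i, (q i - c * p i) * (x i)⁻¹ * (x i * d i) = E - c * T := by
    rw [← Finset.sum_sub_distrib]
    have : ∀ i : Fin n, (q i - c * p i) * (x i * d i)
        - (q i - c * p i) * (x i)⁻¹ * (x i * d i)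
        = q i * y i * d i - c * (p i * y i * d i) := by
      intro i
      have h1 : (x i)⁻¹ * (x i * d i) = d i := by
        rw [← mul_assoc, inv_mul_cancel₀ (hx0 i), one_mul]
      have h2 : y i = x i - 1 := by rw [hy]; simp
      rw [mul_assoc ((q i - c * p i)) ((x i)⁻¹) (x i * d i), h1, h2]
      ring
    rw [Finset.sum_congr rfl (fun i _ => this i), Finset.sum_sub_distrib, hE, hT,
      Finset.mul_sum]
  rw [key1]
  have key2 : (∑ i, p i * (x i * d i)) = T + p ⬝ᵥ d := by
    rw [hT, dotProduct, ← Finset.sum_add_distrib]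
    refine Finset.sum_congr rfl fun i _ => ?_
    have h2 : y i = x i - 1 := by rw [hy]; simp
    rw [h2]; ring
  rw [key2, fact2]
  have hSval : S x = u + κ := by rw [hS x, ← hy, ← hu]
  have hs : u + κ ≠ 0 := by rw [← hSval]; exact hS0
  have hTval : T = -((b - g * u) * u) := by linarith
  rw [hSval, hTval]
  field_simp
  ring
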